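/- For every t ≥ 0, the push-forward measure Φ(·,0,t)#m is absolutely continuous with respect to the d-dimensional Lebesgue measure, with density bounded almost everywhere by ‖ρ‖_∞ e^{dLt}. -/

import Mathlib

open MeasureTheory Real Set
open scoped NNReal ENNReal Topology
open Filter Module intervalIntegral

noncomputable section

/-- The state space `ℝ^d`. -/
abbrev EucS (d : ℕ) := EuclideanSpace ℝ (Fin d)

/-- Lipschitz-on images don't blow up Lebesgue measure by more than `K ^ d`. -/
lemma volume_image_le_of_lipschitzOnWith {d : ℕ} {K : ℝ≥0} {f : EucS d → EucS d}
    {s : Set (EucS d)} (h : LipschitzOnWith K f s) :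
    volume (f '' s) ≤ (K : ℝ≥0∞) ^ d * volume s := by
  have hfr : ((finrank ℝ (EucS d) : ℕ) : ℝ) = (d : ℝ) := by
    simp [finrank_euclideanSpace_fin]
  haveI hHaar : Measure.IsAddHaarMeasure (μH[(d : ℝ)] : Measure (EucS d)) := by
    rw [← hfr]; infer_instance
  have key : (μH[(d : ℝ)] : Measure (EucS d)) =
      Measure.addHaarScalarFactor (μH[(d : ℝ)] : Measure (EucS d)) volume • volume :=
    Measure.isAddLeftInvariant_eq_smul _ _
  set c : ℝ≥0 := Measure.addHaarScalarFactor (μH[(d : ℝ)] : Measure (EucS d)) volume with hc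
  have hcpos : 0 < c := Measure.addHaarScalarFactor_pos_of_isAddHaarMeasure _ _
  have h1 : μH[(d : ℝ)] (f '' s) ≤ (K : ℝ≥0∞) ^ (d : ℝ) * μH[(d : ℝ)] s :=
    h.hausdorffMeasure_image_le (Nat.cast_nonneg d)
  rw [key] at h1
  simp only [Measure.smul_apply, smul_eq_mul] at h1
  rw [ENNReal.rpow_natCast] at h1
  have h2 : (c : ℝ≥0∞) * volume (f '' s) ≤ (c : ℝ≥0∞) * ((K : ℝ≥0∞) ^ d * volume s) := by
    calc (c : ℝ≥0∞) * volume (f '' s) ≤ (K : ℝ≥0∞) ^ d * ((c : ℝ≥0∞) * volume s) := h1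
    _ = (c : ℝ≥0∞) * ((K : ℝ≥0∞) ^ d * volume s) := by ring
  exact (ENNReal.mul_le_mul_iff_right (by exact_mod_cast hcpos.ne') ENNReal.coe_ne_top).mp h2


section ODE

variable {d : ℕ} {M : ℝ} {b : EucS d → ℝ → EucS d}
  (hbc : Continuous fun z : EucS d × ℝ => b z.1 z.2) (hbM : ∀ x t, ‖b x t‖ ≤ M)
  {x : EucS d} {y : ℝ → EucS d}
  (h : ∀ s, 0 ≤ s → y s = x + ∫ σ in (0:ℝ)..s, b (y σ) σ)

include h in
/-- Continuity on `[0, s']` from integrability on `(0, s']`. -/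
lemma flow_contOn_Icc {s' : ℝ} (hs' : 0 ≤ s')
    (hint : IntegrableOn (fun σ => b (y σ) σ) (Ioc 0 s') volume) :
    ContinuousOn y (Icc 0 s') := by
  have hint' : IntegrableOn (fun σ => b (y σ) σ) (uIcc 0 s') volume := by
    rw [uIcc_of_le hs']
    exact hint.congr_set_ae (Ioc_ae_eq_Icc (μ := volume)).symm
  have hcont := (continuousOn_const (c := x)).add
    (intervalIntegral.continuousOn_primitive_interval hint')
  rw [uIcc_of_le hs'] at hcont
  exact hcont.congr fun u hu => h u hu.1

include hbc hbM h in
lemma flow_integrableOn : ∀ s, 0 ≤ s →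
    IntegrableOn (fun σ => b (y σ) σ) (Ioc 0 s) volume := by
  set g : ℝ → EucS d := fun σ => b (y σ) σ with hgdef
  by_contra hcon
  push_neg at hcon
  obtain ⟨s₀, hs₀, hs₀int⟩ := hcon
  set I : Set ℝ := {s | 0 ≤ s ∧ IntegrableOn g (Ioc 0 s) volume} with hI
  have h0I : (0:ℝ) ∈ I := ⟨le_rfl, by simp [IntegrableOn]⟩
  have hmono : ∀ ⦃s s'⦄, s ∈ I → 0 ≤ s' → s' ≤ s → s' ∈ I := fun s s' hs h0 hle =>
    ⟨h0, hs.2.mono_set (Ioc_subset_Ioc_right hle)⟩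
  have hbdd : BddAbove I := by
    refine ⟨s₀, fun s hs => ?_⟩
    by_contra hlt
    push_neg at hlt
    exact hs₀int (hmono hs hs₀ hlt.le).2
  set T := sSup I with hT
  have hT0 : 0 ≤ T := le_csSup hbdd h0I
  have hlow : ∀ s, 0 ≤ s → s < T → IntegrableOn g (Ioc 0 s) volume := by
    intro s h0 hsT
    obtain ⟨s', hs'I, hss'⟩ := exists_lt_of_lt_csSup ⟨0, h0I⟩ hsT
    exact (hmono hs'I h0 hss'.le).2
  -- continuity of y on `[0, T)`
  have hcont : ContinuousOn y (Ico 0 T) := by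
    intro s hs
    set s' := (s + T) / 2 with hs'
    have h1 : s < s' := by simp only [hs']; linarith [hs.2]
    have h2 : s' < T := by simp only [hs']; linarith [hs.2]
    have hC := flow_contOn_Icc h (by linarith [hs.1] : (0:ℝ) ≤ s')
      (hlow s' (by linarith [hs.1]) h2)
    have hmem : Icc (0:ℝ) s' ∈ 𝓝[Ico 0 T] s :=
      Filter.mem_of_superset (inter_mem_nhdsWithin (Ico 0 T) (Iio_mem_nhds h1))
        (fun u hu => ⟨hu.1.1, hu.2.le⟩)
    exact (hC s ⟨hs.1, h1.le⟩).mono_of_mem_nhdsWithin hmem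
  -- hence `g` is continuous on `[0, T)`, bounded, so integrable up to `T`
  have hgc : ContinuousOn g (Ico 0 T) :=
    hbc.comp_continuousOn (hcont.prodMk continuousOn_id)
  have hTmem : T ∈ I := by
    refine ⟨hT0, ?_⟩
    have hIco : IntegrableOn g (Ico 0 T) volume := by
      refine ⟨(hgc.aestronglyMeasurable measurableSet_Ico), ?_⟩
      apply HasFiniteIntegral.restrict_of_bounded (C := M)
        (by exact measure_Ico_lt_top)
      exact (ae_restrict_iff' measurableSet_Ico).2 (Filter.Eventually.of_forall
        fun σ _ => hbM (y σ) σ)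
    have : Ioc (0:ℝ) T =ᵐ[volume] Ico (0:ℝ) T :=
      (Ioc_ae_eq_Icc (μ := volume)).trans (Ico_ae_eq_Icc (μ := volume)).symm
    exact hIco.congr_set_ae this
  -- beyond `T`, there is no integrability, so `y` is constant there
  have hxeq : ∀ s, T < s → y s = x := by
    intro s hTs
    have hni : ¬ IntegrableOn g (Ioc 0 s) volume := by
      intro hint
      exact absurd (le_csSup hbdd ⟨hT0.trans hTs.le, hint⟩) (not_le.2 hTs)
    have h0 : (∫ σ in (0:ℝ)..s, g σ) = 0 := by
      rw [intervalIntegral.integral_of_le (hT0.trans hTs.le)]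
      exact integral_undef hni
    rw [h s (hT0.trans hTs.le)]
    rw [show (∫ σ in (0:ℝ)..s, b (y σ) σ) = ∫ σ in (0:ℝ)..s, g σ from rfl, h0, add_zero]
  -- but then `g` is integrable on `(0, T+1]`, a contradiction
  have h2 : IntegrableOn g (Ioc T (T+1)) volume := by
    have hbx : Continuous fun σ : ℝ => b x σ :=
      hbc.comp (continuous_const.prodMk continuous_id)
    refine (hbx.integrableOn_Ioc).congr_fun ?_ measurableSet_Ioc
    intro σ hσ
    simp only [hgdef, hxeq σ hσ.1]
  have h3 : IntegrableOn g (Ioc 0 (T+1)) volume := by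
    rw [← Set.Ioc_union_Ioc_eq_Ioc hT0 (by linarith : T ≤ T + 1)]
    exact hTmem.2.union h2
  have : T + 1 ≤ T := le_csSup hbdd ⟨by linarith, h3⟩
  linarith

include hbc hbM h in
lemma flow_contOn : ContinuousOn y (Ici 0) := by
  intro s hs
  have hC := flow_contOn_Icc h (by exact hs.trans (by linarith) : (0:ℝ) ≤ s + 1)
    (flow_integrableOn hbc hbM h (s+1) (le_trans hs (by linarith)))
  have hmem : Icc (0:ℝ) (s+1) ∈ 𝓝[Ici 0] s :=
    Filter.mem_of_superset (inter_mem_nhdsWithin (Ici 0) (Iio_mem_nhds (by linarith : s < s + 1)))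
      (fun u hu => ⟨hu.1, hu.2.le⟩)
  exact (hC s ⟨hs, by linarith⟩).mono_of_mem_nhdsWithin hmem

include hbc hbM h in
lemma flow_hasDerivAt {s : ℝ} (hs : 0 < s) : HasDerivAt y (b (y s) s) s := by
  have hcont := flow_contOn hbc hbM h
  have hgc : ContinuousOn (fun σ => b (y σ) σ) (Ici 0) :=
    hbc.comp_continuousOn (hcont.prodMk continuousOn_id)
  have hIci : Ici (0:ℝ) ∈ 𝓝 s := Ici_mem_nhds hs
  have hgat : ContinuousAt (fun σ => b (y σ) σ) s := hgc.continuousAt hIci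
  have hint : IntervalIntegrable (fun σ => b (y σ) σ) volume 0 s :=
    (intervalIntegrable_iff_integrableOn_Ioc_of_le hs.le).2
      (flow_integrableOn hbc hbM h s hs.le)
  have hmeas : StronglyMeasurableAtFilter (fun σ => b (y σ) σ) (𝓝 s) volume :=
    ⟨Ici 0, hIci, hgc.aestronglyMeasurable measurableSet_Ici⟩
  have hD := (intervalIntegral.integral_hasDerivAt_right hint hmeas hgat).const_add x
  refine hD.congr_of_eventuallyEq ?_
  filter_upwards [hIci] with u hu
  exact h u hu

include hbc hbM h in
lemma flow_hasDerivWithinAt0 : HasDerivWithinAt y (b (y 0) 0) (Ici 0) 0 := by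
  have hcont := flow_contOn hbc hbM h
  have hgc : ContinuousOn (fun σ => b (y σ) σ) (Ici 0) :=
    hbc.comp_continuousOn (hcont.prodMk continuousOn_id)
  have hint : IntervalIntegrable (fun σ => b (y σ) σ) volume 0 0 :=
    intervalIntegrable_iff.2 (by simp [IntegrableOn])
  have hmeas : StronglyMeasurableAtFilter (fun σ => b (y σ) σ) (𝓝[Ioi 0] 0) volume :=
    ⟨Ici 0, nhdsWithin_mono 0 Ioi_subset_Ici_self self_mem_nhdsWithin,
      hgc.aestronglyMeasurable measurableSet_Ici⟩
  have hcw : ContinuousWithinAt (fun σ => b (y σ) σ) (Ioi 0) 0 :=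
    (hgc 0 (by exact self_mem_Ici)).mono Ioi_subset_Ici_self
  have hD := (intervalIntegral.integral_hasDerivWithinAt_right (s := Ici (0:ℝ)) (t := Ioi (0:ℝ))
    hint hmeas hcw).const_add x
  refine hD.congr_of_mem ?_ (self_mem_Ici)
  intro u hu
  exact h u hu

end ODE

section Gronwall

variable {d : ℕ} {M L : ℝ} {b : EucS d → ℝ → EucS d}
  (hbc : Continuous fun z : EucS d × ℝ => b z.1 z.2) (hbM : ∀ x t, ‖b x t‖ ≤ M)
  (hbL : ∀ x y t, ‖b x t - b y t‖ ≤ L * ‖x - y‖)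
  {x x' : EucS d} {y y' : ℝ → EucS d}
  (h : ∀ s, 0 ≤ s → y s = x + ∫ σ in (0:ℝ)..s, b (y σ) σ)
  (h' : ∀ s, 0 ≤ s → y' s = x' + ∫ σ in (0:ℝ)..s, b (y' σ) σ)

include h in
lemma flow_zero : y 0 = x := by
  have := h 0 le_rfl
  simpa using this

include hbc hbM hbL h h' in
lemma flow_lip {t : ℝ} (ht : 0 ≤ t) :
    ‖y t - y' t‖ ≤ exp (L * t) * ‖x - x'‖ := by
  have hcont := flow_contOn hbc hbM h
  have hcont' := flow_contOn hbc hbM h'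
  have key := norm_le_gronwallBound_of_norm_deriv_right_le (f := fun σ => y σ - y' σ)
    (f' := fun σ => b (y σ) σ - b (y' σ) σ) (δ := ‖x - x'‖) (K := L) (ε := 0) (a := 0) (b := t)
    ((hcont.mono Icc_subset_Ici_self).sub (hcont'.mono Icc_subset_Ici_self))
    ?_ (by show ‖y 0 - y' 0‖ ≤ _; rw [flow_zero h, flow_zero h']) ?_
  · have := key t ⟨ht, le_rfl⟩
    rwa [sub_zero, gronwallBound_ε0, mul_comm ‖x - x'‖] at this
  · intro σ hσ
    rcases eq_or_lt_of_le hσ.1 with rfl | hpos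
    · exact (flow_hasDerivWithinAt0 hbc hbM h).sub (flow_hasDerivWithinAt0 hbc hbM h')
    · exact ((flow_hasDerivAt hbc hbM h hpos).sub
        (flow_hasDerivAt hbc hbM h' hpos)).hasDerivWithinAt
  · intro σ _
    rw [add_zero]
    exact hbL (y σ) (y' σ) σ

include hbc hbM hbL h h' in
lemma flow_lip_rev {t : ℝ} (ht : 0 ≤ t) :
    ‖x - x'‖ ≤ exp (L * t) * ‖y t - y' t‖ := by
  rcases eq_or_lt_of_le ht with rfl | htpos
  · rw [flow_zero h, flow_zero h']
    simp
  have hcont := flow_contOn hbc hbM h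
  have hcont' := flow_contOn hbc hbM h'
  have hmaps : ∀ σ ∈ Icc (0:ℝ) t, t - σ ∈ Ici (0:ℝ) := fun σ hσ => by
    simp only [mem_Ici, sub_nonneg]; exact hσ.2
  have hcomp : ContinuousOn (fun σ => y (t - σ) - y' (t - σ)) (Icc 0 t) := by
    have hc : ContinuousOn (fun σ : ℝ => t - σ) (Icc 0 t) :=
      (continuous_const.sub continuous_id).continuousOn
    exact (hcont.comp hc hmaps).sub (hcont'.comp hc hmaps)
  have key := norm_le_gronwallBound_of_norm_deriv_right_le
    (f := fun σ => y (t - σ) - y' (t - σ))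
    (f' := fun σ => (-1 : ℝ) • (b (y (t - σ)) (t - σ) - b (y' (t - σ)) (t - σ)))
    (δ := ‖y t - y' t‖) (K := L) (ε := 0) (a := 0) (b := t)
    hcomp ?_ (by simp) ?_
  · have := key t ⟨ht, le_rfl⟩
    simp only [sub_zero, gronwallBound_ε0, sub_self, flow_zero h, flow_zero h'] at this
    rwa [mul_comm] at this
  · intro σ hσ
    have hts : 0 < t - σ := by simp only [sub_pos]; exact hσ.2
    have hd : HasDerivAt (fun σ : ℝ => t - σ) (-1) σ := by
      simpa using (hasDerivAt_id σ).const_sub t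
    have h1 := (flow_hasDerivAt hbc hbM h hts).scomp σ hd
    have h2 := (flow_hasDerivAt hbc hbM h' hts).scomp σ hd
    exact (h1.sub h2).hasDerivWithinAt.congr_deriv (by simp [smul_sub])
  · intro σ _
    rw [add_zero]
    calc ‖(-1 : ℝ) • (b (y (t - σ)) (t - σ) - b (y' (t - σ)) (t - σ))‖
        = ‖b (y (t - σ)) (t - σ) - b (y' (t - σ)) (t - σ)‖ := by
          rw [neg_one_smul, norm_neg]
      _ ≤ L * ‖y (t - σ) - y' (t - σ)‖ := hbL _ _ _

end Gronwall

/-- For every `t ≥ 0`, the push-forward measure `Φ(·,0,t)#m` of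
`m = ρ ℒ^d` is absolutely continuous with respect to the `d`-dimensional Lebesgue
measure, with density bounded a.e. by `‖ρ‖_∞ e^{dLt}`. -/
theorem pushforward_density_bound
    (d : ℕ) (M L : ℝ) (hM : 0 < M) (hL : 0 < L)
    (b : EucS d → ℝ → EucS d)
    (hbc : Continuous fun z : EucS d × ℝ => b z.1 z.2)
    (hbM : ∀ x t, ‖b x t‖ ≤ M)
    (hbL : ∀ x y t, ‖b x t - b y t‖ ≤ L * ‖x - y‖)
    (Φ : EucS d → ℝ → ℝ → EucS d)
    (hΦ : ∀ x t s, t ≤ s → Φ x t s = x + ∫ σ in t..s, b (Φ x t σ) σ)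
    (ρ : EucS d → ℝ) (hρm : Measurable ρ) (hρnn : ∀ x, 0 ≤ ρ x)
    (R : ℝ) (hρb : ∀ᵐ x ∂(volume : Measure (EucS d)), ρ x ≤ R)
    (m : Measure (EucS d))
    (hm : m = volume.withDensity fun x => ENNReal.ofReal (ρ x)) :
    ∀ t : ℝ, 0 ≤ t →
      Measure.map (fun x => Φ x 0 t) m ≪ (volume : Measure (EucS d)) ∧
      Measure.map (fun x => Φ x 0 t) m
        ≤ ENNReal.ofReal (R * exp (d * L * t)) • (volume : Measure (EucS d)) := by
  intro t ht
  set f : EucS d → EucS d := fun x => Φ x 0 t with hfdef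
  have hflow : ∀ x : EucS d, ∀ s, 0 ≤ s →
      Φ x 0 s = x + ∫ σ in (0:ℝ)..s, b (Φ x 0 σ) σ := fun x s hs => hΦ x 0 s hs
  have hup : ∀ x x' : EucS d, ‖f x - f x'‖ ≤ exp (L * t) * ‖x - x'‖ :=
    fun x x' => flow_lip hbc hbM hbL (hflow x) (hflow x') ht
  have hdown : ∀ x x' : EucS d, ‖x - x'‖ ≤ exp (L * t) * ‖f x - f x'‖ :=
    fun x x' => flow_lip_rev hbc hbM hbL (hflow x) (hflow x') ht
  set K : ℝ≥0 := (exp (L * t)).toNNReal with hK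
  have hKc : ((K : ℝ≥0) : ℝ) = exp (L * t) := Real.coe_toNNReal _ (exp_pos _).le
  have hfL : LipschitzWith K f := by
    refine LipschitzWith.of_dist_le_mul fun u v => ?_
    rw [dist_eq_norm, dist_eq_norm, hKc]
    exact hup u v
  have hfm : Measurable f := hfL.continuous.measurable
  have hinj : Function.Injective f := by
    intro u v huv
    have h1 := hdown u v
    rw [huv, sub_self, norm_zero, mul_zero] at h1
    have h2 : u - v = 0 := norm_le_zero_iff.mp h1
    exact sub_eq_zero.mp h2
  set finv := Function.invFun f with hfinvdef
  have hleft : ∀ u, finv (f u) = u := fun u => Function.leftInverse_invFun hinj u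
  have hinvlip : LipschitzOnWith K finv (range f) := by
    rw [lipschitzOnWith_iff_dist_le_mul]
    rintro u ⟨a, rfl⟩ v ⟨c, rfl⟩
    rw [hleft, hleft, dist_eq_norm, dist_eq_norm, hKc]
    exact hdown a c
  have hpre : ∀ s : Set (EucS d), volume (f ⁻¹' s) ≤ (K : ℝ≥0∞) ^ d * volume s := by
    intro s
    have h1 : f ⁻¹' s ⊆ finv '' (s ∩ range f) := fun u hu =>
      ⟨f u, ⟨hu, mem_range_self u⟩, hleft u⟩
    calc volume (f ⁻¹' s) ≤ volume (finv '' (s ∩ range f)) := measure_mono h1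
      _ ≤ (K : ℝ≥0∞) ^ d * volume (s ∩ range f) :=
          volume_image_le_of_lipschitzOnWith (hinvlip.mono inter_subset_right)
      _ ≤ (K : ℝ≥0∞) ^ d * volume s := by
          gcongr
          exact inter_subset_left
  have hR : 0 ≤ R := by
    have hvol : (volume : Measure (EucS d)) ≠ 0 := by
      intro h0
      have := isOpen_univ.measure_pos (volume : Measure (EucS d))
        (by exact univ_nonempty)
      rw [h0] at this
      simp at this
    have : (Filter.NeBot (ae (volume : Measure (EucS d)))) := ae_neBot.2 hvol
    obtain ⟨x₀, hx₀⟩ := hρb.exists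
    exact (hρnn x₀).trans hx₀
  have hmb : ∀ s : Set (EucS d), MeasurableSet s →
      m s ≤ ENNReal.ofReal R * volume s := by
    intro s hs
    rw [hm, withDensity_apply _ hs]
    calc ∫⁻ a in s, ENNReal.ofReal (ρ a) ∂volume
        ≤ ∫⁻ _ in s, ENNReal.ofReal R ∂volume := by
          refine lintegral_mono_ae (ae_restrict_of_ae ?_)
          exact hρb.mono fun a ha => ENNReal.ofReal_le_ofReal ha
      _ = ENNReal.ofReal R * volume s := by
          rw [setLIntegral_const]
  have hKpow : (K : ℝ≥0∞) ^ d = ENNReal.ofReal (exp (d * L * t)) := by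
    rw [show ((K : ℝ≥0) : ℝ≥0∞) = ENNReal.ofReal (exp (L * t)) by
      rw [← hKc]; simp [ENNReal.ofReal_coe_nnreal]]
    rw [← ENNReal.ofReal_pow (exp_pos _).le]
    congr 1
    rw [← Real.exp_nat_mul, mul_assoc]
  have hbound : ∀ s : Set (EucS d), MeasurableSet s →
      (Measure.map f m) s ≤ ENNReal.ofReal (R * exp (d * L * t)) * volume s := by
    intro s hs
    rw [Measure.map_apply hfm hs]
    calc m (f ⁻¹' s) ≤ ENNReal.ofReal R * volume (f ⁻¹' s) := hmb _ (hfm hs)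
      _ ≤ ENNReal.ofReal R * ((K : ℝ≥0∞) ^ d * volume s) := by
          gcongr
          exact hpre s
      _ = ENNReal.ofReal (R * exp (d * L * t)) * volume s := by
          rw [hKpow, ← mul_assoc, ← ENNReal.ofReal_mul hR]
  constructor
  · refine Measure.AbsolutelyContinuous.mk fun s hs hs0 => ?_
    have := hbound s hs
    rw [hs0, mul_zero] at this
    exact le_antisymm this zero_le
  · rw [Measure.le_iff]
    intro s hs
    rw [Measure.smul_apply, smul_eq_mul]
    exact hbound s hs
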